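/- Let n ≥ 2 and let R̂ be uniformly distributed on the unit sphere S^{n−1} ⊂ ℝⁿ. For any fixed unit vector r̂ and any γ ∈ (0,1) with nγ² > 1 − γ², the probability that ⟨r̂, R̂⟩ ≥ γ is at least (1 − (1−γ²)/(nγ²)) · (1/sqrt(2πn)) · (1−γ²)^{(n−1)/2} / γ. -/

import Mathlib

open MeasureTheory
open scoped RealInnerProductSpace

section Aux
open Real Set

lemma gamma_sq_le (x : ℝ) (hx : 0 < x) :
    Gamma (x + 1/2) ^ 2 ≤ Gamma x * Gamma (x + 1) := by
  have h2 : (0:ℝ) < x + 1 := by linarith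
  have hc := Real.convexOn_log_Gamma.2 (mem_Ioi.2 hx) (mem_Ioi.2 h2)
      (by norm_num : (0:ℝ) ≤ 1/2) (by norm_num : (0:ℝ) ≤ 1/2) (by norm_num)
  simp only [Function.comp_apply, smul_eq_mul] at hc
  rw [show (1/2 : ℝ) * x + 1/2 * (x+1) = x + 1/2 by ring] at hc
  have hGx := Real.Gamma_pos_of_pos hx
  have hGx1 := Real.Gamma_pos_of_pos h2
  have hGm := Real.Gamma_pos_of_pos (by linarith : (0:ℝ) < x + 1/2)
  have h := Real.exp_le_exp.mpr hc
  rw [Real.exp_log hGm] at h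
  calc Gamma (x+1/2)^2
      ≤ (Real.exp (1/2 * Real.log (Gamma x) + 1/2 * Real.log (Gamma (x+1))))^2 := by
        nlinarith [h, hGm.le]
    _ = Gamma x * Gamma (x+1) := by
        rw [← Real.exp_nat_mul]
        push_cast
        rw [show (2:ℝ) * (1/2 * Real.log (Gamma x) + 1/2 * Real.log (Gamma (x+1)))
            = Real.log (Gamma x) + Real.log (Gamma (x+1)) by ring,
          Real.exp_add, Real.exp_log hGx, Real.exp_log hGx1]

lemma K_le_one (n : ℕ) (hn : 2 ≤ n) :
    (n:ℝ) * (Real.sqrt π ^ n / Gamma (n/2 + 1)) ≤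
      Real.sqrt (2 * π * n) * (Real.sqrt π ^ (n-1) / Gamma (((n:ℝ)-1)/2 + 1)) := by
  have hn0 : (0:ℝ) < n := by positivity
  have hx : (0:ℝ) < (n:ℝ)/2 := by positivity
  have hkey := gamma_sq_le ((n:ℝ)/2) hx
  rw [show ((n:ℝ)-1)/2 + 1 = (n:ℝ)/2 + 1/2 by ring]
  have hGa := Real.Gamma_pos_of_pos (by linarith : (0:ℝ) < (n:ℝ)/2 + 1/2)
  have hGb := Real.Gamma_pos_of_pos (by linarith : (0:ℝ) < (n:ℝ)/2 + 1)
  have hGc := Real.Gamma_pos_of_pos hx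
  have hrec : Gamma ((n:ℝ)/2 + 1) = ((n:ℝ)/2) * Gamma ((n:ℝ)/2) :=
    Real.Gamma_add_one (ne_of_gt hx)
  have hsp : Real.sqrt π ^ n = Real.sqrt π ^ (n-1) * Real.sqrt π := by
    rw [← pow_succ]; congr 1; omega
  have hspos : (0:ℝ) < Real.sqrt π := Real.sqrt_pos.2 Real.pi_pos
  have hApos : (0:ℝ) < Real.sqrt π ^ (n-1) := by positivity
  -- core : n * sqrt π * Ga ≤ sqrt (2 π n) * Gb
  have hcore : (n:ℝ) * Real.sqrt π * Gamma ((n:ℝ)/2+1/2) ≤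
      Real.sqrt (2*π*n) * Gamma ((n:ℝ)/2+1) := by
    have hs2 : (Real.sqrt (2*π*n))^2 = 2*π*n := Real.sq_sqrt (by positivity)
    have hpi : (Real.sqrt π)^2 = π := Real.sq_sqrt Real.pi_pos.le
    have hsq : ((n:ℝ) * Real.sqrt π * Gamma ((n:ℝ)/2+1/2))^2 ≤
        (Real.sqrt (2*π*n) * Gamma ((n:ℝ)/2+1))^2 := by
      have h1 : ((n:ℝ) * Real.sqrt π * Gamma ((n:ℝ)/2+1/2))^2
          = (n:ℝ)^2 * π * Gamma ((n:ℝ)/2+1/2)^2 := by rw [mul_pow, mul_pow, hpi]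
      have h2 : (Real.sqrt (2*π*n) * Gamma ((n:ℝ)/2+1))^2 = 2*π*(n:ℝ) * Gamma ((n:ℝ)/2+1)^2 := by
        rw [mul_pow, hs2]
      rw [h1, h2]
      have : Gamma ((n:ℝ)/2) = 2 * Gamma ((n:ℝ)/2+1) / n := by
        field_simp at hrec ⊢; linarith [hrec]
      rw [this] at hkey
      have hmul := mul_le_mul_of_nonneg_left hkey (by positivity : (0:ℝ) ≤ (n:ℝ)^2 * π)
      calc (n:ℝ)^2 * π * Gamma ((n:ℝ)/2+1/2)^2
          ≤ (n:ℝ)^2 * π * (2 * Gamma ((n:ℝ)/2+1) / n * Gamma ((n:ℝ)/2+1)) := hmul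
        _ = 2*π*(n:ℝ) * Gamma ((n:ℝ)/2+1)^2 := by field_simp
    have hl : (0:ℝ) ≤ (n:ℝ) * Real.sqrt π * Gamma ((n:ℝ)/2+1/2) := by positivity
    have hr : (0:ℝ) ≤ Real.sqrt (2*π*n) * Gamma ((n:ℝ)/2+1) := by positivity
    exact (pow_le_pow_iff_left₀ hl hr two_ne_zero).mp hsq
  rw [hsp, mul_div_assoc', mul_div_assoc', div_le_div_iff₀ hGb hGa]
  calc (n:ℝ) * (Real.sqrt π ^ (n-1) * Real.sqrt π) * Gamma ((n:ℝ)/2+1/2)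
      = Real.sqrt π ^ (n-1) * ((n:ℝ) * Real.sqrt π * Gamma ((n:ℝ)/2+1/2)) := by ring
    _ ≤ Real.sqrt π ^ (n-1) * (Real.sqrt (2*π*n) * Gamma ((n:ℝ)/2+1)) :=
        mul_le_mul_of_nonneg_left hcore hApos.le
    _ = Real.sqrt (2*π*n) * Real.sqrt π ^ (n-1) * Gamma ((n:ℝ)/2+1) := by ring

lemma rpow_succ_nonneg (x q : ℝ) (hx : 0 ≤ x) (hq : 0 < q) :
    x ^ (q + 1) = x ^ q * x := by
  rcases eq_or_lt_of_le hx with h | h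
  · rw [← h, Real.zero_rpow (by positivity), Real.zero_rpow (ne_of_gt hq), mul_zero]
  · rw [Real.rpow_add_one (ne_of_gt h)]

lemma integral_bound (n : ℕ) (hn : 2 ≤ n) (γ : ℝ) (hγ0 : 0 < γ) (hγ1 : γ < 1) :
    γ * (1-γ^2) ^ (((n:ℝ)+1)/2) / (n*γ^2+1)
      ≤ ∫ t in γ..1, (1-t^2) ^ (((n:ℝ)-1)/2) := by
  set q : ℝ := ((n:ℝ)-1)/2 with hq_def
  set p : ℝ := ((n:ℝ)+1)/2 with hp_def
  have hn1 : (1:ℝ) ≤ (n:ℝ) := by exact_mod_cast Nat.one_le_of_lt hn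
  have hn2 : (2:ℝ) ≤ (n:ℝ) := by exact_mod_cast hn
  have hq0 : 0 < q := by rw [hq_def]; linarith
  have hp1 : (1:ℝ) ≤ p := by rw [hp_def]; linarith
  have hpq : p = q + 1 := by rw [hp_def, hq_def]; ring
  -- the auxiliary function and its derivative
  set h : ℝ → ℝ := fun t => t * (1-t^2)^p / ((n:ℝ)*t^2+1) with hh_def
  set D : ℝ → ℝ := fun t =>
    (((1-t^2)^p + t*(p * (1-t^2)^q * (-2*t))) * ((n:ℝ)*t^2+1)
      - (t*(1-t^2)^p) * ((n:ℝ)*(2*t))) / ((n:ℝ)*t^2+1)^2 with hD_def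
  have hd_ne : ∀ t : ℝ, (n:ℝ)*t^2+1 ≠ 0 := by
    intro t; positivity
  have hderiv : ∀ t ∈ uIcc γ 1, HasDerivAt h (D t) t := by
    intro t _
    have h1 : HasDerivAt (fun t : ℝ => 1 - t^2) (-2*t) t := by
      simpa using ((hasDerivAt_pow 2 t).const_sub 1)
    have h2 : HasDerivAt (fun t : ℝ => (1 - t^2)^p) (p * (1-t^2)^(p-1) * (-2*t)) t := by
      have := HasDerivAt.rpow_const h1 (Or.inr hp1)
      convert this using 1; ring
    have h3 : HasDerivAt (fun t : ℝ => t * (1-t^2)^p)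
        ((1-t^2)^p + t*(p * (1-t^2)^(p-1) * (-2*t))) t := by
      simpa using (hasDerivAt_id t).fun_mul h2
    have h4 : HasDerivAt (fun t : ℝ => (n:ℝ)*t^2+1) ((n:ℝ)*(2*t)) t := by
      simpa using ((hasDerivAt_pow 2 t).const_mul (n:ℝ)).add_const 1
    have h5 := h3.div h4 (hd_ne t)
    have hpq1 : p - 1 = q := by rw [hpq]; ring
    rw [hpq1] at h5
    exact h5
  have cbase : Continuous fun t : ℝ => 1 - t^2 := continuous_const.sub (continuous_pow 2)
  have c1 : Continuous fun t : ℝ => (1-t^2)^p :=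
    Continuous.rpow_const cbase (fun x => Or.inr (by positivity))
  have c2 : Continuous fun t : ℝ => (1-t^2)^q :=
    Continuous.rpow_const cbase (fun x => Or.inr hq0.le)
  have cden : Continuous fun t : ℝ => (n:ℝ)*t^2+1 :=
    (continuous_const.mul (continuous_pow 2)).add continuous_const
  have cneg2 : Continuous fun t : ℝ => (-2:ℝ)*t := continuous_const.mul continuous_id
  have c2t : Continuous fun t : ℝ => (n:ℝ)*(2*t) :=
    continuous_const.mul (continuous_const.mul continuous_id)
  have cnum : Continuous fun t : ℝ =>
      ((1-t^2)^p + t*(p * (1-t^2)^q * (-2*t))) * ((n:ℝ)*t^2+1)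
        - (t*(1-t^2)^p) * ((n:ℝ)*(2*t)) := by
    exact ((c1.add (continuous_id.mul ((continuous_const.mul c2).mul cneg2))).mul cden).sub
      ((continuous_id.mul c1).mul c2t)
  have hDcont : ContinuousOn D (uIcc γ 1) := by
    apply ContinuousOn.div
    · exact cnum.continuousOn
    · exact (cden.pow 2).continuousOn
    · intro t _; positivity
  have hDint : IntervalIntegrable D MeasureTheory.volume γ 1 :=
    hDcont.intervalIntegrable
  have hftc := intervalIntegral.integral_eq_sub_of_hasDerivAt hderiv hDint
  have hh1 : h 1 = 0 := by
    simp only [hh_def]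
    norm_num
    rw [Real.zero_rpow (by positivity)]
    simp
  have hgcont : ContinuousOn (fun t : ℝ => (1-t^2)^q) (uIcc γ 1) :=
    Continuous.continuousOn
      (Continuous.rpow_const (by continuity) (fun x => Or.inr hq0.le))
  have hgint : IntervalIntegrable (fun t : ℝ => (1-t^2)^q) MeasureTheory.volume γ 1 :=
    hgcont.intervalIntegrable
  have hpt : ∀ t ∈ Icc γ 1, -D t ≤ (1-t^2)^q := by
    intro t ht
    obtain ⟨ht0, ht1⟩ := ht
    have ht0' : 0 < t := lt_of_lt_of_le hγ0 ht0
    have ha : (0:ℝ) ≤ 1 - t^2 := by nlinarith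
    have hA : (0:ℝ) ≤ (1-t^2)^q := Real.rpow_nonneg ha q
    have hap : (1-t^2)^p = (1-t^2)^q * (1-t^2) := by
      rw [hpq]; exact rpow_succ_nonneg _ _ ha hq0
    have hE : (0:ℝ) ≤ (1-t^2)^q * (2 - 2*t^2) := mul_nonneg hA (by nlinarith)
    simp only [hD_def]
    rw [hap, neg_le, le_div_iff₀ (by positivity : (0:ℝ) < ((n:ℝ)*t^2+1)^2)]
    rw [hp_def]
    nlinarith [hE]
  have hmono : ∫ t in γ..1, -D t ≤ ∫ t in γ..1, (1-t^2)^q :=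
    intervalIntegral.integral_mono_on hγ1.le hDint.neg hgint hpt
  have : ∫ t in γ..1, -D t = h γ := by
    rw [intervalIntegral.integral_neg, hftc, hh1]; ring
  rw [this] at hmono
  calc γ * (1-γ^2) ^ p / ((n:ℝ)*γ^2+1) = h γ := by rw [hh_def]
    _ ≤ _ := hmono

lemma final_real (N : ℝ) (hN : 2 ≤ N) (γ : ℝ) (hγ0 : 0 < γ) (hγ1 : γ < 1)
    (hγn : 1 - γ^2 < N*γ^2) (Cm Vn A : ℝ) (hCm : 0 < Cm) (hVn : 0 < Vn) (hA0 : 0 < A)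
    (hK : N * Vn ≤ Real.sqrt (2*π*N) * Cm) :
    ((1 - (1-γ^2)/(N*γ^2)) * (1/Real.sqrt (2*π*N)) * A / γ) * (N * Vn)
      ≤ N * (Cm * (γ*A/N + γ*(A*(1-γ^2))/(N*γ^2+1))) := by
  have hNpos : (0:ℝ) < N := by linarith
  have hS : 0 < Real.sqrt (2*π*N) := Real.sqrt_pos.2 (by nlinarith [Real.pi_pos])
  have hE0 : 0 ≤ 1 - (1-γ^2)/(N*γ^2) := by
    rw [sub_nonneg, div_le_one (by positivity)]; linarith
  have hstep1 : ((1 - (1-γ^2)/(N*γ^2)) * (1/Real.sqrt (2*π*N)) * A / γ) * (N * Vn)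
      ≤ ((1 - (1-γ^2)/(N*γ^2)) * (1/Real.sqrt (2*π*N)) * A / γ) * (Real.sqrt (2*π*N) * Cm) :=
    mul_le_mul_of_nonneg_left hK (by positivity)
  have hstep2 : ((1 - (1-γ^2)/(N*γ^2)) * (1/Real.sqrt (2*π*N)) * A / γ) * (Real.sqrt (2*π*N) * Cm)
      = (1 - (1-γ^2)/(N*γ^2)) * Cm * A / γ := by
    field_simp
  have hRHS : N * (Cm * (γ*A/N + γ*(A*(1-γ^2))/(N*γ^2+1))) = Cm * A * γ * (N+1)/(N*γ^2+1) := by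
    field_simp
    ring
  have hw : (1 - (1-γ^2)/(N*γ^2)) * (N*γ^2+1) ≤ γ^2*(N+1) := by
    have h2 : (1 - (1-γ^2)/(N*γ^2)) = (N*γ^2 - (1-γ^2))/(N*γ^2) := by field_simp
    rw [h2, div_mul_eq_mul_div, div_le_iff₀ (by positivity)]
    nlinarith
  have hstep3 : (1 - (1-γ^2)/(N*γ^2)) * Cm * A / γ ≤ Cm * A * γ * (N+1)/(N*γ^2+1) := by
    rw [div_le_div_iff₀ hγ0 (by positivity)]
    calc (1 - (1-γ^2)/(N*γ^2)) * Cm * A * (N*γ^2+1)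
        = Cm*A*((1 - (1-γ^2)/(N*γ^2))*(N*γ^2+1)) := by ring
      _ ≤ Cm*A*(γ^2*(N+1)) := mul_le_mul_of_nonneg_left hw (by positivity)
      _ = Cm * A * γ * (N+1) * γ := by ring
  calc ((1 - (1-γ^2)/(N*γ^2)) * (1/Real.sqrt (2*π*N)) * A / γ) * (N * Vn)
      ≤ _ := hstep1
    _ = (1 - (1-γ^2)/(N*γ^2)) * Cm * A / γ := hstep2
    _ ≤ Cm * A * γ * (N+1)/(N*γ^2+1) := hstep3
    _ = N * (Cm * (γ*A/N + γ*(A*(1-γ^2))/(N*γ^2+1))) := hRHS.symm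

end Aux

open scoped ENNReal Pointwise in
open Real Set Metric in
set_option maxHeartbeats 1000000 in
theorem stmt8 (n : ℕ) (hn : 2 ≤ n)
    (r : EuclideanSpace ℝ (Fin n)) (hr : ‖r‖ = 1) (γ : ℝ)
    (hγ0 : 0 < γ) (hγ1 : γ < 1) (hγn : 1 - γ ^ 2 < n * γ ^ 2) :
    ENNReal.ofReal ((1 - (1 - γ ^ 2) / (n * γ ^ 2)) * (1 / Real.sqrt (2 * Real.pi * n)) *
        (1 - γ ^ 2) ^ (((n : ℝ) - 1) / 2) / γ) ≤
      (((volume : Measure (EuclideanSpace ℝ (Fin n))).toSphere Set.univ)⁻¹ •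
          (volume : Measure (EuclideanSpace ℝ (Fin n))).toSphere)
        {z : Metric.sphere (0 : EuclideanSpace ℝ (Fin n)) 1 |
          γ ≤ ⟪r, (z : EuclideanSpace ℝ (Fin n))⟫} := by
  obtain ⟨m, rfl⟩ : ∃ m, n = m + 1 := ⟨n - 1, by omega⟩
  have hm : 1 ≤ m := by omega
  haveI : Nonempty (Fin (m+1)) := ⟨0⟩
  haveI : Nonempty (Fin m) := ⟨⟨0, hm⟩⟩
  -- real constants
  set q : ℝ := (((m+1:ℕ) : ℝ) - 1) / 2 with hq_def
  set p : ℝ := (((m+1:ℕ) : ℝ) + 1) / 2 with hp_def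
  set c : ℝ := Real.sqrt (1 - γ^2) / γ with hc_def
  set ρ : ℝ → ℝ := fun t => min (t * c) (Real.sqrt (1 - t^2)) with hρ_def
  set Cm : ℝ := Real.sqrt π ^ m / Real.Gamma ((m:ℝ)/2 + 1) with hCm_def
  set Vn : ℝ := Real.sqrt π ^ (m+1) / Real.Gamma (((m+1:ℕ):ℝ)/2 + 1) with hVn_def
  set J1 : ℝ := c^m * γ^(m+1) / (m+1) with hJ1_def
  set J2 : ℝ := γ * (1-γ^2)^p / ((m+1:ℕ)*γ^2+1) with hJ2_def
  set R : ℝ := (1 - (1 - γ ^ 2) / ((m+1:ℕ) * γ ^ 2)) * (1 / Real.sqrt (2 * π * (m+1:ℕ))) *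
        (1 - γ ^ 2) ^ q / γ with hR_def
  -- the cap
  set C : Set (sphere (0:(EuclideanSpace ℝ (Fin (m+1)))) 1) := {z | γ ≤ ⟪r, (z : (EuclideanSpace ℝ (Fin (m+1))))⟫} with hC_def
  have hC : MeasurableSet C := by
    have : Continuous fun z : sphere (0:(EuclideanSpace ℝ (Fin (m+1)))) 1 => ⟪r, (z : (EuclideanSpace ℝ (Fin (m+1))))⟫ :=
      (continuous_const.inner continuous_id).comp continuous_subtype_val
    exact measurableSet_le measurable_const this.measurable
  -- geometry setup
  set e1 : EuclideanSpace ℝ (Fin (m+1)) := EuclideanSpace.single 0 1 with he1_def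
  have hne1 : ‖e1‖ = 1 := by
    rw [he1_def, EuclideanSpace.norm_single, norm_one]
  set e : (EuclideanSpace ℝ (Fin (m+1))) ≃ₗᵢ[ℝ] (EuclideanSpace ℝ (Fin (m+1))) := Submodule.reflection (ℝ ∙ (r - e1))ᗮ with he_def
  have he : e r = e1 := Submodule.reflection_sub (by rw [hr, hne1])
  set ψ := MeasurableEquiv.piFinSuccAbove (fun _ : Fin (m+1) => ℝ) 0 with hψ_def
  set φ := (MeasurableEquiv.toLp 2 (Fin (m+1) → ℝ)).symm with hφ_def
  set Φ : (EuclideanSpace ℝ (Fin (m+1))) → ℝ × (Fin m → ℝ) := fun x => ψ (φ (e x)) with hΦ_def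
  have hΦmp : MeasurePreserving Φ volume volume :=
    ((volume_preserving_piFinSuccAbove (fun _ : Fin (m+1) => ℝ) 0).comp
      (EuclideanSpace.volume_preserving_symm_measurableEquiv_toLp (Fin (m+1)))).comp
        (LinearIsometryEquiv.measurePreserving e)
  set T : Set (ℝ × (Fin m → ℝ)) :=
    {pt | 0 < pt.1 ∧ pt.1 < 1 ∧ Real.sqrt (∑ j, pt.2 j ^ 2) < ρ pt.1} with hT_def
  have hρcont : Continuous ρ := by
    apply Continuous.min
    · exact continuous_id.mul continuous_const
    · exact (continuous_const.sub (continuous_pow 2)).sqrt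
  have hTopen : IsOpen T := by
    have h1 : Continuous fun pt : ℝ × (Fin m → ℝ) => Real.sqrt (∑ j, pt.2 j ^ 2) := by
      apply Continuous.sqrt
      exact continuous_finset_sum _ fun j _ => ((continuous_apply j).comp continuous_snd).pow 2
    exact (isOpen_lt continuous_const continuous_fst).inter
      ((isOpen_lt continuous_fst continuous_const).inter
        (isOpen_lt h1 (hρcont.comp continuous_fst)))
  have hTmeas : MeasurableSet T := hTopen.measurableSet
  -- the subset property
  have hsub : Φ ⁻¹' T ⊆ (Ioo (0:ℝ) 1) • (Subtype.val '' C) := by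
    intro x hx
    obtain ⟨ht0, ht1, hwlt⟩ := hx
    set t : ℝ := ⟪r, x⟫ with ht_def
    -- identify the first coordinate
    have hΦ1 : (Φ x).1 = t := by
      have h1 : (Φ x).1 = (e x) 0 := rfl
      have h2 : ⟪e1, e x⟫ = (1:ℝ) * (e x) 0 := EuclideanSpace.inner_single_left 0 1 (e x)
      have h3 : ⟪e1, e x⟫ = t := by rw [← he, LinearIsometryEquiv.inner_map_map]
      rw [h1, ← h3, h2]; ring
    rw [hΦ1] at ht0 ht1 hwlt
    -- identify the norm
    have hw_eq : ‖x - t • r‖ = Real.sqrt (∑ j, (Φ x).2 j ^ 2) := by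
      have h1 : ‖x - t • r‖ = ‖e x - t • e1‖ := by
        rw [← he, ← LinearIsometryEquiv.map_smul, ← LinearIsometryEquiv.map_sub,
          e.norm_map]
      rw [h1, EuclideanSpace.norm_eq]
      congr 1
      rw [Fin.sum_univ_succAbove _ 0]
      have hex0 : (e x) 0 = t := by rw [← hΦ1]; rfl
      have h0 : ‖(e x - t • e1) 0‖ ^ 2 = 0 := by
        have h00 : (e x - t • e1) 0 = (e x) 0 - t * (e1 0) := rfl
        rw [h00, hex0, he1_def]
        simp [EuclideanSpace.single_apply]
      rw [h0, zero_add]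
      congr 1
      ext j
      have h4 : (e x - t • e1) ((0:Fin (m+1)).succAbove j)
          = (e x) ((0:Fin (m+1)).succAbove j) - t * (e1 ((0:Fin (m+1)).succAbove j)) := rfl
      have h5 : e1 ((0:Fin (m+1)).succAbove j) = 0 := by
        rw [he1_def]
        simp only [EuclideanSpace.single_apply]
        rw [if_neg]
        rw [Fin.zero_succAbove]
        exact Fin.succ_ne_zero j
      have h6 : (Φ x).2 j = (e x) ((0:Fin (m+1)).succAbove j) := rfl
      rw [h4, h5, h6, Real.norm_eq_abs, sq_abs, mul_zero, sub_zero]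
    rw [← hw_eq] at hwlt
    set w : ℝ := ‖x - t • r‖ with hw_def
    have hw0 : 0 ≤ w := norm_nonneg _
    -- norm decomposition
    have hinner0 : ⟪t • r, x - t • r⟫ = 0 := by
      rw [real_inner_smul_left, inner_sub_right, real_inner_smul_right,
        real_inner_self_eq_norm_sq, hr]
      ring
    have hnx2 : ‖x‖ ^ 2 = t ^ 2 + w ^ 2 := by
      have hd : x = t • r + (x - t • r) := by abel
      calc ‖x‖ ^ 2 = ‖t • r + (x - t • r)‖ ^ 2 := by rw [← hd]
        _ = ‖t • r‖ ^ 2 + 2 * ⟪t • r, x - t • r⟫ + w ^ 2 := by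
            rw [norm_add_sq_real, hw_def]
        _ = t ^ 2 + w ^ 2 := by
            rw [hinner0, norm_smul, hr, Real.norm_eq_abs, abs_of_pos ht0]
            ring
    -- bounds from ρ
    have hu0 : (0:ℝ) ≤ 1 - γ^2 := by nlinarith
    have hc2 : c ^ 2 = (1 - γ^2) / γ^2 := by
      rw [hc_def, div_pow, Real.sq_sqrt hu0]
    have hw1 : w ^ 2 < 1 - t ^ 2 := by
      have h1 : w < Real.sqrt (1 - t^2) := lt_of_lt_of_le hwlt (min_le_right _ _)
      exact (Real.lt_sqrt hw0).mp h1
    have hw2 : w ^ 2 < t ^ 2 * (1 - γ^2) / γ^2 := by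
      have h1 : w < t * c := lt_of_lt_of_le hwlt (min_le_left _ _)
      have h2 : w ^ 2 < (t * c)^2 := by
        have := mul_self_lt_mul_self hw0 h1
        simpa [pow_two] using this
      rw [mul_pow, hc2] at h2
      calc w ^ 2 < t^2 * ((1-γ^2)/γ^2) := h2
        _ = t^2 * (1-γ^2)/γ^2 := by ring
    -- x is nonzero, small
    have hxlt1 : ‖x‖ < 1 := by
      have h2 : ‖x‖^2 < 1^2 := by rw [one_pow]; nlinarith
      exact lt_of_pow_lt_pow_left₀ 2 zero_le_one h2
    have hx0 : 0 < ‖x‖ := by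
      rcases eq_or_lt_of_le (norm_nonneg x) with h | h
      · exfalso
        have : x = 0 := by rwa [eq_comm, norm_eq_zero] at h
        rw [ht_def, this, inner_zero_right] at ht0
        exact lt_irrefl _ ht0
      · exact h
    have hγx : γ * ‖x‖ < t := by
      have hsq : (γ * ‖x‖)^2 < t^2 := by
        have hγ2 : (0:ℝ) < γ^2 := by positivity
        rw [mul_pow, hnx2]
        calc γ^2 * (t^2 + w^2) < γ^2 * (t^2 + t^2*(1-γ^2)/γ^2) := by
              apply mul_lt_mul_of_pos_left _ hγ2
              linarith
          _ = t^2 := by field_simp; ring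
      exact lt_of_pow_lt_pow_left₀ 2 ht0.le hsq
    -- assemble membership
    have hz : ‖x‖⁻¹ • x ∈ sphere (0 : EuclideanSpace ℝ (Fin (m+1))) 1 := by
      rw [mem_sphere_zero_iff_norm, norm_smul, norm_inv, norm_norm,
        inv_mul_cancel₀ hx0.ne']
    have hzC : (⟨‖x‖⁻¹ • x, hz⟩ : sphere (0 : EuclideanSpace ℝ (Fin (m+1))) 1) ∈ C := by
      rw [hC_def]
      show γ ≤ ⟪r, ‖x‖⁻¹ • x⟫
      rw [real_inner_smul_right, ← ht_def, le_inv_mul_iff₀ hx0]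
      nlinarith [hγx]
    have hmem := Set.smul_mem_smul (Set.mem_Ioo.mpr ⟨hx0, hxlt1⟩)
      (Set.mem_image_of_mem Subtype.val hzC)
    simpa [smul_inv_smul₀ hx0.ne'] using hmem
  -- common positivity facts
  have hu : (0:ℝ) < 1 - γ^2 := by nlinarith
  have hm1 : (1:ℝ) ≤ (m:ℝ) := by exact_mod_cast hm
  have hq0 : 0 < q := by rw [hq_def]; push_cast; linarith
  have hqm : q = (m:ℝ)/2 := by rw [hq_def]; push_cast; ring
  have hp_eq : p = q + 1 := by rw [hp_def, hq_def]; ring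
  have hA0 : 0 < (1-γ^2)^q := Real.rpow_pos_of_pos hu q
  have hc0 : 0 ≤ c := by rw [hc_def]; positivity
  have hc2 : c^2 = (1-γ^2)/γ^2 := by rw [hc_def, div_pow, Real.sq_sqrt hu.le]
  have hCm0 : 0 < Cm := by
    rw [hCm_def]
    exact div_pos (by positivity) (Real.Gamma_pos_of_pos (by positivity))
  have hVn0 : 0 < Vn := by
    rw [hVn_def]
    exact div_pos (by positivity) (Real.Gamma_pos_of_pos (by positivity))
  have hsm : (Real.sqrt (1-γ^2))^m = (1-γ^2)^q := by
    rw [Real.sqrt_eq_rpow, ← Real.rpow_natCast ((1-γ^2)^((1:ℝ)/2)) m,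
      ← Real.rpow_mul hu.le, hqm, show (1:ℝ)/2*(m:ℝ) = (m:ℝ)/2 by ring]
  -- the volume of T
  have hvolT : ENNReal.ofReal (Cm * (J1 + J2)) ≤ volume T := by
    have hball : ∀ Rr : ℝ, volume {w : Fin m → ℝ | Real.sqrt (∑ j, w j ^ 2) < Rr}
        = ENNReal.ofReal Rr ^ m * ENNReal.ofReal Cm := by
      intro Rr
      have hmeas : MeasurableSet {w : Fin m → ℝ | Real.sqrt (∑ j, w j ^ 2) < Rr} :=
        measurableSet_lt
          ((continuous_finset_sum _ fun j _ => (continuous_apply j).pow 2).sqrt).measurable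
          measurable_const
      rw [← (EuclideanSpace.volume_preserving_symm_measurableEquiv_toLp (Fin m)).measure_preimage
        hmeas.nullMeasurableSet]
      have hpre : (MeasurableEquiv.toLp 2 (Fin m → ℝ)).symm ⁻¹'
          {w : Fin m → ℝ | Real.sqrt (∑ j, w j ^ 2) < Rr}
          = Metric.ball (0 : EuclideanSpace ℝ (Fin m)) Rr := by
        ext v
        rw [Set.mem_preimage, mem_ball_zero_iff, EuclideanSpace.norm_eq]
        simp only [Set.mem_setOf_eq, MeasurableEquiv.coe_toLp_symm,
          Real.norm_eq_abs, sq_abs]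
      rw [hpre, EuclideanSpace.volume_ball]
      rw [hCm_def]
      simp
    have hρnn : ∀ t : ℝ, 0 < t → 0 ≤ ρ t := by
      intro t ht
      rw [hρ_def]
      exact le_min (by positivity) (Real.sqrt_nonneg _)
    have hslices : ∀ t : ℝ, volume (Prod.mk t ⁻¹' T)
        = Set.indicator (Ioo (0:ℝ) 1) (fun t => ENNReal.ofReal (ρ t ^ m * Cm)) t := by
      intro t
      by_cases ht : t ∈ Ioo (0:ℝ) 1
      · rw [Set.indicator_of_mem ht]
        have hpre : Prod.mk t ⁻¹' T = {w : Fin m → ℝ | Real.sqrt (∑ j, w j ^ 2) < ρ t} := by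
          ext w
          simp only [hT_def, Set.mem_preimage, Set.mem_setOf_eq]
          exact ⟨fun ⟨_, _, h⟩ => h, fun h => ⟨ht.1, ht.2, h⟩⟩
        rw [hpre, hball, ← ENNReal.ofReal_pow (hρnn t ht.1),
          ← ENNReal.ofReal_mul (pow_nonneg (hρnn t ht.1) m)]
      · rw [Set.indicator_of_notMem ht]
        have hpre : Prod.mk t ⁻¹' T = ∅ := by
          ext w
          simp only [hT_def, Set.mem_preimage, Set.mem_setOf_eq, Set.mem_empty_iff_false,
            iff_false, not_and]
          intro h1 h2
          exact absurd (Set.mem_Ioo.mpr ⟨h1, h2⟩) ht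
        rw [hpre, measure_empty]
    have hvol_eq : volume T
        = ∫⁻ t in Ioo (0:ℝ) 1, ENNReal.ofReal (ρ t ^ m * Cm) := by
      rw [MeasureTheory.Measure.volume_eq_prod, Measure.prod_apply hTmeas]
      rw [← lintegral_indicator measurableSet_Ioo]
      exact lintegral_congr hslices
    have hcont : Continuous fun t : ℝ => ρ t ^ m * Cm := (hρcont.pow m).mul continuous_const
    have hint : IntegrableOn (fun t : ℝ => ρ t ^ m * Cm) (Ioo (0:ℝ) 1) :=
      (hcont.integrableOn_Icc).mono_set Ioo_subset_Icc_self
    have hae : 0 ≤ᵐ[volume.restrict (Ioo (0:ℝ) 1)] fun t : ℝ => ρ t ^ m * Cm := by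
      refine (ae_restrict_iff' measurableSet_Ioo).mpr (Filter.Eventually.of_forall ?_)
      intro t ht
      have := hρnn t ht.1
      positivity
    rw [hvol_eq, ← MeasureTheory.ofReal_integral_eq_lintegral_ofReal hint hae]
    apply ENNReal.ofReal_le_ofReal
    -- real integral computation
    rw [← integral_Ioc_eq_integral_Ioo, ← intervalIntegral.integral_of_le zero_le_one]
    have hint1 : IntervalIntegrable (fun t : ℝ => ρ t ^ m * Cm) volume 0 γ :=
      hcont.intervalIntegrable _ _
    have hint2 : IntervalIntegrable (fun t : ℝ => ρ t ^ m * Cm) volume γ 1 :=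
      hcont.intervalIntegrable _ _
    rw [← intervalIntegral.integral_add_adjacent_intervals hint1 hint2]
    have hpiece1 : ∫ t in (0:ℝ)..γ, ρ t ^ m * Cm = Cm * J1 := by
      have hcongr : ∀ t ∈ uIcc (0:ℝ) γ, ρ t ^ m * Cm = (t*c) ^ m * Cm := by
        intro t htm
        rw [uIcc_of_le hγ0.le, mem_Icc] at htm
        obtain ⟨ht0', htγ'⟩ := htm
        have h1 : ρ t = t * c := by
          rw [hρ_def]
          apply min_eq_left
          rw [Real.le_sqrt (mul_nonneg ht0' hc0) (by nlinarith)]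
          rw [mul_pow, hc2, mul_div_assoc', div_le_iff₀ (by positivity)]
          nlinarith
        rw [h1]
      rw [intervalIntegral.integral_congr hcongr]
      have : ∀ t : ℝ, (t*c)^m * Cm = (c^m * Cm) * t^m := by intro t; ring
      simp_rw [this]
      rw [intervalIntegral.integral_const_mul, integral_pow]
      rw [hJ1_def]
      push_cast
      field_simp
      ring
    have hsqm : ∀ x : ℝ, 0 ≤ x → (Real.sqrt x)^m = x ^ q := by
      intro x hx
      rw [Real.sqrt_eq_rpow, ← Real.rpow_natCast (x^((1:ℝ)/2)) m, ← Real.rpow_mul hx, hqm,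
        show (1:ℝ)/2*(m:ℝ) = (m:ℝ)/2 by ring]
    have hbound := integral_bound (m+1) hn γ hγ0 hγ1
    rw [← hp_def, ← hq_def] at hbound
    have hpiece2 : Cm * J2 ≤ ∫ t in γ..1, ρ t ^ m * Cm := by
      have hcongr : Set.EqOn (fun t : ℝ => ρ t ^ m * Cm) (fun t : ℝ => (1-t^2) ^ q * Cm)
          (uIcc γ 1) := by
        intro t htm
        rw [uIcc_of_le hγ1.le, mem_Icc] at htm
        have ht2 : (0:ℝ) ≤ 1 - t^2 := by nlinarith [htm.1, htm.2]
        have htγ : γ ≤ t := htm.1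
        have h1 : ρ t = Real.sqrt (1 - t^2) := by
          rw [hρ_def]
          apply min_eq_right
          have hcc : 1 - t^2 ≤ (t*c)^2 := by
            rw [mul_pow, hc2, ← sub_nonneg]
            have h3 : t^2 * ((1-γ^2)/γ^2) - (1-t^2) = (t^2 - γ^2) * (1/γ^2) := by
              field_simp
              ring
            rw [h3]
            have h4 : γ^2 ≤ t^2 := by nlinarith [hγ0.le]
            have h5 : (0:ℝ) ≤ 1/γ^2 := by positivity
            nlinarith
          calc Real.sqrt (1-t^2) ≤ Real.sqrt ((t*c)^2) := Real.sqrt_le_sqrt hcc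
            _ = t*c := Real.sqrt_sq (mul_nonneg (le_trans hγ0.le htγ) hc0)
        simp only
        rw [h1, hsqm _ ht2]
      rw [intervalIntegral.integral_congr hcongr, intervalIntegral.integral_mul_const]
      rw [hJ2_def]
      exact (mul_le_mul_of_nonneg_left hbound hCm0.le).trans_eq (mul_comm _ _)
    calc Cm * (J1 + J2) = Cm * J1 + Cm * J2 := by ring
      _ ≤ (∫ t in (0:ℝ)..γ, ρ t ^ m * Cm) + ∫ t in γ..1, ρ t ^ m * Cm := by
          rw [hpiece1]
          exact add_le_add_right hpiece2 _
  -- the real inequality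
  have hR0 : 0 ≤ R := by
    rw [hR_def]
    have h1 : 0 ≤ 1 - (1-γ^2)/(((m+1:ℕ):ℝ)*γ^2) := by
      rw [sub_nonneg, div_le_one (by positivity)]
      push_cast
      push_cast at hγn
      linarith
    apply div_nonneg _ hγ0.le
    apply mul_nonneg (mul_nonneg h1 (by positivity)) (Real.rpow_nonneg hu.le q)
  have hK : ((m+1:ℕ):ℝ) * Vn ≤ Real.sqrt (2*π*((m+1:ℕ):ℝ)) * Cm := by
    have h := K_le_one (m+1) hn
    have e1 : m + 1 - 1 = m := by omega
    rw [e1] at h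
    rw [show ((m+1:ℕ):ℝ) - 1 = (m:ℝ) by push_cast; ring] at h
    rw [hVn_def, hCm_def]
    exact h
  have hreal : R * (((m+1:ℕ):ℝ) * Vn) ≤ ((m+1:ℕ):ℝ) * (Cm * (J1 + J2)) := by
    have hJ1' : J1 = γ * (1-γ^2)^q / ((m+1:ℕ):ℝ) := by
      rw [hJ1_def, hc_def, div_pow, hsm]
      push_cast
      field_simp
      ring
    have hJ2' : J2 = γ * ((1-γ^2)^q * (1-γ^2)) / (((m+1:ℕ):ℝ)*γ^2+1) := by
      rw [hJ2_def, hp_eq, rpow_succ_nonneg _ _ hu.le hq0]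
    rw [hR_def, hJ1', hJ2']
    exact final_real ((m+1:ℕ):ℝ) (by exact_mod_cast hn) γ hγ0 hγ1 (by push_cast at hγn ⊢; linarith)
      Cm Vn _ hCm0 hVn0 hA0 hK
  -- assembling
  have hU : (volume : Measure (EuclideanSpace ℝ (Fin (m+1)))).toSphere Set.univ = ((m+1 : ℕ) : ℝ≥0∞) * ENNReal.ofReal Vn := by
    rw [Measure.toSphere_apply_univ]
    congr 1
    · simp [finrank_euclideanSpace_fin]
    · rw [EuclideanSpace.volume_ball]
      simp [Vn]
  have hCap : ENNReal.ofReal (((m+1:ℕ):ℝ) * (Cm * (J1 + J2))) ≤ (volume : Measure (EuclideanSpace ℝ (Fin (m+1)))).toSphere C := by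
    rw [Measure.toSphere_apply' _ hC]
    calc ENNReal.ofReal (((m+1:ℕ):ℝ) * (Cm * (J1 + J2)))
        = ((m+1:ℕ) : ℝ≥0∞) * ENNReal.ofReal (Cm * (J1 + J2)) := by
          rw [ENNReal.ofReal_mul (by positivity), ENNReal.ofReal_natCast]
      _ ≤ ((m+1:ℕ) : ℝ≥0∞) * volume T := by
          exact mul_le_mul_right hvolT _
      _ = ((m+1:ℕ) : ℝ≥0∞) * volume (Φ ⁻¹' T) := by
          rw [hΦmp.measure_preimage hTmeas.nullMeasurableSet]
      _ ≤ (Module.finrank ℝ (EuclideanSpace ℝ (Fin (m+1))) : ℝ≥0∞) * volume ((Ioo (0:ℝ) 1) • (Subtype.val '' C)) := by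
          rw [finrank_euclideanSpace_fin]
          exact mul_le_mul_right (measure_mono hsub) _
  have hU0 : (volume : Measure (EuclideanSpace ℝ (Fin (m+1)))).toSphere Set.univ ≠ 0 := by
    rw [hU]
    refine mul_ne_zero (by simp) ?_
    simp only [ne_eq, ENNReal.ofReal_eq_zero, not_le]
    rw [hVn_def]
    positivity
  have hUtop : (volume : Measure (EuclideanSpace ℝ (Fin (m+1)))).toSphere Set.univ ≠ ⊤ := by
    rw [hU]; exact ENNReal.mul_ne_top (by simp) ENNReal.ofReal_ne_top
  rw [Measure.smul_apply, smul_eq_mul]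
  have hmain : ENNReal.ofReal R * (volume : Measure (EuclideanSpace ℝ (Fin (m+1)))).toSphere Set.univ
      ≤ (volume : Measure (EuclideanSpace ℝ (Fin (m+1)))).toSphere C := by
    rw [hU]
    calc ENNReal.ofReal R * (((m+1:ℕ) : ℝ≥0∞) * ENNReal.ofReal Vn)
        = ENNReal.ofReal (R * (((m+1:ℕ):ℝ) * Vn)) := by
          rw [ENNReal.ofReal_mul hR0, ENNReal.ofReal_mul (by positivity), ENNReal.ofReal_natCast]
      _ ≤ ENNReal.ofReal (((m+1:ℕ):ℝ) * (Cm * (J1 + J2))) := ENNReal.ofReal_le_ofReal hreal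
      _ ≤ _ := hCap
  calc ENNReal.ofReal R
      = ((volume : Measure (EuclideanSpace ℝ (Fin (m+1)))).toSphere Set.univ)⁻¹ *
          (ENNReal.ofReal R * (volume : Measure (EuclideanSpace ℝ (Fin (m+1)))).toSphere Set.univ) := by
        rw [mul_comm (ENNReal.ofReal R), ← mul_assoc, ENNReal.inv_mul_cancel hU0 hUtop, one_mul]
    _ ≤ _ := mul_le_mul_right hmain _
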